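/- Every MRMT matrix is Hurwitz: if A is an n×n irreducible Metzler matrix of the form where row/column 1 is coupled to all other indices, the submatrix Ã (deleting row and column 1) is diagonal with negative entries -d₁ᵢ/Vᵢ, A₁ᵢ = d₁ᵢ/V₁, Aᵢ₁ = d₁ᵢ/Vᵢ with d₁ᵢ > 0, Vᵢ > 0, and A₁₁ = -(Q/V₁) - ∑ᵢ d₁ᵢ/V₁ with Q > 0, then every eigenvalue of A has strictly negative real part. -/

import Mathlib

open Matrix

/-- every MRMT matrix is Hurwitz: all its (complex) eigenvalues have
strictly negative real part. -/
theorem mrmt_stmt8 {n : ℕ} (Q : ℝ) (hQ : 0 < Q)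
    (Vv : Fin (n + 1) → ℝ) (hV : ∀ i, 0 < Vv i)
    (d : Fin n → ℝ) (hd : ∀ i, 0 < d i)
    (A : Matrix (Fin (n + 1)) (Fin (n + 1)) ℝ)
    (hA00 : A 0 0 = -(Q / Vv 0) - ∑ i, d i / Vv 0)
    (hA0i : ∀ i : Fin n, A 0 i.succ = d i / Vv 0)
    (hAi0 : ∀ i : Fin n, A i.succ 0 = d i / Vv i.succ)
    (hAij : ∀ i j : Fin n, A i.succ j.succ = if i = j then -(d i / Vv i.succ) else 0) :
    ∀ μ ∈ spectrum ℂ (A.map Complex.ofReal), μ.re < 0 := by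
  intro μ h
  set M := A.map Complex.ofReal with hMdef
  -- extract eigenvector
  rw [← AlgEquiv.spectrum_eq (Matrix.toLinAlgEquiv (Pi.basisFun ℂ (Fin (n+1)))),
    ← Module.End.hasEigenvalue_iff_mem_spectrum] at h
  obtain ⟨v, hv⟩ := h.exists_hasEigenvector
  have heig : M *ᵥ v = μ • v := by
    have := hv.apply_eq_smul
    simpa [Matrix.toLinAlgEquiv_apply, Matrix.toLin_eq_toLin', Matrix.toLin'_apply,
      ← Pi.single_smul, Finset.univ_sum_single,
      show ⇑((Pi.basisFun ℂ (Fin (n + 1))).repr v) = v from by ext i; simp] using this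
  have hvne : v ≠ 0 := hv.2
  have hV0 : (Vv 0 : ℂ) ≠ 0 := by exact_mod_cast (hV 0).ne'
  have hVs : ∀ i : Fin n, (Vv i.succ : ℂ) ≠ 0 := fun i => by exact_mod_cast (hV i.succ).ne'
  set c := starRingEnd ℂ
  -- per-index computations
  have hrow0 : (Vv 0 : ℂ) * c (v 0) * (M *ᵥ v) 0
      = -(Q : ℂ) * (c (v 0) * v 0) + ∑ i, (d i : ℂ) * (c (v 0) * (v i.succ - v 0)) := by
    have : (M *ᵥ v) 0 = (A 0 0 : ℂ) * v 0 + ∑ i : Fin n, (A 0 i.succ : ℂ) * v i.succ := by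
      simp [M, Matrix.mulVec, dotProduct, Fin.sum_univ_succ]
    rw [this, hA00]
    simp only [hA0i]
    push_cast
    rw [← Finset.sum_div]
    simp only [div_mul_eq_mul_div]
    rw [← Finset.sum_div]
    have s3 : ∑ i : Fin n, (d i : ℂ) * (c (v 0) * (v i.succ - v 0))
        = c (v 0) * (∑ i : Fin n, (d i : ℂ) * v i.succ)
          - (∑ i : Fin n, (d i : ℂ)) * (c (v 0) * v 0) := by
      rw [Finset.mul_sum, Finset.sum_mul, ← Finset.sum_sub_distrib]
      exact Finset.sum_congr rfl (fun i _ => by ring)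
    rw [s3]
    field_simp
    ring
  have hrows : ∀ i : Fin n, (Vv i.succ : ℂ) * c (v i.succ) * (M *ᵥ v) i.succ
      = (d i : ℂ) * (c (v i.succ) * (v 0 - v i.succ)) := by
    intro i
    have : (M *ᵥ v) i.succ = (A i.succ 0 : ℂ) * v 0 + ∑ j : Fin n, (A i.succ j.succ : ℂ) * v j.succ := by
      simp [M, Matrix.mulVec, dotProduct, Fin.sum_univ_succ]
    rw [this, hAi0]
    have hsum : ∑ j : Fin n, (A i.succ j.succ : ℂ) * v j.succ = -(d i / Vv i.succ : ℝ) * v i.succ := by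
      rw [Finset.sum_eq_single i]
      · rw [hAij i i]; simp
      · intro j _ hji
        rw [hAij i j, if_neg (Ne.symm hji)]; simp
      · simp
    rw [hsum]
    push_cast
    have hc : (Vv i.succ : ℂ) * ((d i : ℂ) / (Vv i.succ : ℂ)) = (d i : ℂ) :=
      mul_div_cancel₀ _ (hVs i)
    linear_combination (c (v i.succ) * v 0 - c (v i.succ) * v i.succ) * hc
  -- the key identity
  have key : μ * (∑ i, (Vv i : ℂ) * (Complex.normSq (v i) : ℂ))
      = -(Q : ℂ) * (Complex.normSq (v 0) : ℂ)
        - ∑ i, (d i : ℂ) * (Complex.normSq (v 0 - v i.succ) : ℂ) := by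
    have lhs : ∑ i, (Vv i : ℂ) * c (v i) * (M *ᵥ v) i
        = μ * (∑ i, (Vv i : ℂ) * (Complex.normSq (v i) : ℂ)) := by
      rw [heig, Finset.mul_sum]
      apply Finset.sum_congr rfl
      intro i _
      rw [← Complex.mul_conj (v i)]
      simp only [Pi.smul_apply, smul_eq_mul, c]
      ring
    rw [← lhs, Fin.sum_univ_succ, hrow0]
    rw [Finset.sum_congr rfl (fun i _ => hrows i), add_assoc, ← Finset.sum_add_distrib]
    have hterm : ∀ i : Fin n,
        (d i : ℂ) * (c (v 0) * (v i.succ - v 0)) + (d i : ℂ) * (c (v i.succ) * (v 0 - v i.succ))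
        = -((d i : ℂ) * (Complex.normSq (v 0 - v i.succ) : ℂ)) := by
      intro i
      rw [← Complex.mul_conj (v 0 - v i.succ)]
      simp only [map_sub, c]
      ring
    rw [Finset.sum_congr rfl (fun i _ => hterm i), ← Complex.mul_conj (v 0)]
    simp only [c]
    rw [Finset.sum_neg_distrib]
    ring
  -- real parts
  set S : ℝ := ∑ i, Vv i * Complex.normSq (v i) with hSdef
  set R : ℝ := -Q * Complex.normSq (v 0) - ∑ i, d i * Complex.normSq (v 0 - v i.succ) with hRdef
  have key' : μ.re * S = R := by
    have h2 : μ * (S : ℂ) = (R : ℂ) := by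
      rw [hSdef, hRdef]
      push_cast
      exact key
    have := congrArg Complex.re h2
    simpa [Complex.mul_re] using this
  have hSpos : 0 < S := by
    obtain ⟨i, hi⟩ := Function.ne_iff.mp hvne
    apply Finset.sum_pos' (fun j _ => mul_nonneg (hV j).le (Complex.normSq_nonneg _))
    refine ⟨i, Finset.mem_univ i, mul_pos (hV i) (Complex.normSq_pos.mpr ?_)⟩
    simpa using hi
  have hRneg : R < 0 := by
    have hnn : ∀ i ∈ Finset.univ, (0:ℝ) ≤ d i * Complex.normSq (v 0 - v i.succ) :=
      fun i _ => mul_nonneg (hd i).le (Complex.normSq_nonneg _)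
    rw [hRdef]
    by_cases h0 : v 0 = 0
    · obtain ⟨i, hi⟩ := Function.ne_iff.mp hvne
      have hi' : v i ≠ 0 := by simpa using hi
      rcases Fin.eq_zero_or_eq_succ i with rfl | ⟨j, rfl⟩
      · exact absurd h0 hi'
      · have hpos : 0 < ∑ i : Fin n, d i * Complex.normSq (v 0 - v i.succ) := by
          refine Finset.sum_pos' hnn ⟨j, Finset.mem_univ j, ?_⟩
          refine mul_pos (hd j) (Complex.normSq_pos.mpr ?_)
          rw [h0, zero_sub, neg_ne_zero]
          exact hi'
        have : (0:ℝ) ≤ Q * Complex.normSq (v 0) :=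
          mul_nonneg hQ.le (Complex.normSq_nonneg _)
        linarith
    · have h1 : 0 < Q * Complex.normSq (v 0) := mul_pos hQ (Complex.normSq_pos.mpr h0)
      have h2 : (0:ℝ) ≤ ∑ i : Fin n, d i * Complex.normSq (v 0 - v i.succ) :=
        Finset.sum_nonneg hnn
      linarith
  nlinarith [hSpos, hRneg, key']
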